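/- Let m ≤ n be nonnegative integers with m ≡ n (mod 2). Suppose that for each integer k with |k| ≤ m and k ≡ m (mod 2) we are given an entire function h_k : ℂ → ℂ, and that these satisfy h_k(λ) = h_{−k}(−λ) for all such k and all λ ∈ ℂ, and h_k(l) = h_l(k) for all integers k, l with |k|, |l| ≤ m and k ≡ l ≡ m (mod 2). Then there exist entire functions h̃_k : ℂ → ℂ for all integers k with |k| ≤ n and k ≡ n (mod 2), such that h̃_k = h_k for all |k| ≤ m, and such that h̃_k(λ) = h̃_{−k}(−λ) for all such k and all λ ∈ ℂ, and h̃_k(l) = h̃_l(k) for all integers k, l with |k|, |l| ≤ n and k ≡ l ≡ n (mod 2). (This extension is constructed by Lagrange interpolation in the proof of the Level-3 intertwining theorem for SL(2,ℂ).) -/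

import Mathlib

open Finset

noncomputable def S10 (m : ℕ) : Finset ℤ :=
  (Finset.Icc (-(m:ℤ)) m).filter (fun j => j % 2 = (m:ℤ) % 2)

lemma memS10 (m : ℕ) (j : ℤ) : j ∈ S10 m ↔ j.natAbs ≤ m ∧ j % 2 = (m:ℤ) % 2 := by
  simp only [S10, Finset.mem_filter, Finset.mem_Icc]
  omega

noncomputable def L10 (m : ℕ) (j : ℤ) (w : ℂ) : ℂ :=
  ∏ i ∈ (S10 m).erase j, (w - (i:ℂ)) / ((j:ℂ) - (i:ℂ))

lemma L10_diff (m : ℕ) (j : ℤ) : Differentiable ℂ (L10 m j) := by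
  unfold L10
  apply Differentiable.fun_finsetProd
  intro i _
  exact (differentiable_id.sub_const _).div_const _

lemma L10_self (m : ℕ) (j : ℤ) : L10 m j (j:ℂ) = 1 := by
  unfold L10
  apply Finset.prod_eq_one
  intro i hi
  have hij : i ≠ j := (Finset.mem_erase.mp hi).1
  have : (j:ℂ) - (i:ℂ) ≠ 0 := by
    intro hc
    have h2 : (j:ℂ) = (i:ℂ) := sub_eq_zero.mp hc
    have h3 : j = i := by exact_mod_cast h2
    exact hij h3.symm
  field_simp

lemma L10_ne (m : ℕ) (j k : ℤ) (hk : k ∈ S10 m) (hkj : k ≠ j) : L10 m j (k:ℂ) = 0 := by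
  unfold L10
  apply Finset.prod_eq_zero (Finset.mem_erase.mpr ⟨hkj, hk⟩)
  simp

lemma S10_neg (m : ℕ) (j : ℤ) : -j ∈ S10 m ↔ j ∈ S10 m := by
  simp only [memS10]; omega

lemma L10_neg (m : ℕ) (j : ℤ) (w : ℂ) : L10 m (-j) (-w) = L10 m j w := by
  unfold L10
  have himg : (S10 m).erase (-j) = Finset.image (fun i => -i) ((S10 m).erase j) := by
    ext i
    simp only [Finset.mem_erase, Finset.mem_image, memS10]
    constructor
    · rintro ⟨h1, h2, h3⟩
      exact ⟨-i, ⟨by omega, by omega, by omega⟩, by omega⟩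
    · rintro ⟨a, ⟨h1, h2, h3⟩, rfl⟩
      exact ⟨by omega, by omega, by omega⟩
  rw [himg, Finset.prod_image (by intro a _ b _ hab; exact neg_injective hab)]
  apply Finset.prod_congr rfl
  intro i _
  push_cast
  rw [show -w - -(i:ℂ) = -(w - i) by ring, show -(j:ℂ) - -(i:ℂ) = -((j:ℂ) - i) by ring,
    neg_div_neg_eq]

lemma sumneg10 (m : ℕ) (F : ℤ → ℂ) : ∑ j ∈ S10 m, F j = ∑ j ∈ S10 m, F (-j) := by
  have himg : S10 m = Finset.image (fun i => -i) (S10 m) := by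
    ext i
    simp only [Finset.mem_image, memS10]
    constructor
    · intro ⟨h1, h2⟩; exact ⟨-i, ⟨by omega, by omega⟩, by omega⟩
    · rintro ⟨a, ⟨h1, h2⟩, rfl⟩; exact ⟨by omega, by omega⟩
  conv_lhs => rw [himg]
  rw [Finset.sum_image (by intro a _ b _ hab; exact neg_injective hab)]


/-- every symmetric tuple of entire functions at level `m` (i.e. an element
of `ₘA_m`, indexed by the integers `k` with `|k| ≤ m`, `k ≡ m (mod 2)`) extends to a
symmetric tuple of entire functions at level `n`, whenever `m ≤ n` and `m ≡ n (mod 2)`. -/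
theorem stmt_10 (m n : ℕ) (hmn : m ≤ n) (hpar : m % 2 = n % 2)
    (h : ℤ → ℂ → ℂ)
    (hdiff : ∀ k : ℤ, k.natAbs ≤ m → k % 2 = (m : ℤ) % 2 → Differentiable ℂ (h k))
    (hsym : ∀ k : ℤ, k.natAbs ≤ m → k % 2 = (m : ℤ) % 2 → ∀ z : ℂ, h k z = h (-k) (-z))
    (hint : ∀ k l : ℤ, k.natAbs ≤ m → l.natAbs ≤ m →
      k % 2 = (m : ℤ) % 2 → l % 2 = (m : ℤ) % 2 → h k (l : ℂ) = h l (k : ℂ)) :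
    ∃ ht : ℤ → ℂ → ℂ,
      (∀ k : ℤ, k.natAbs ≤ n → k % 2 = (n : ℤ) % 2 → Differentiable ℂ (ht k)) ∧
      (∀ k : ℤ, k.natAbs ≤ m → k % 2 = (m : ℤ) % 2 → ht k = h k) ∧
      (∀ k : ℤ, k.natAbs ≤ n → k % 2 = (n : ℤ) % 2 → ∀ z : ℂ, ht k z = ht (-k) (-z)) ∧
      (∀ k l : ℤ, k.natAbs ≤ n → l.natAbs ≤ n →
        k % 2 = (n : ℤ) % 2 → l % 2 = (n : ℤ) % 2 → ht k (l : ℂ) = ht l (k : ℂ)) := by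
  classical
  refine ⟨fun k z =>
      (∑ j ∈ S10 m, L10 m j (k:ℂ) * h j z)
      + (∑ j ∈ S10 m, L10 m j z * h j (k:ℂ))
      - ∑ i ∈ S10 m, ∑ j ∈ S10 m, L10 m i (k:ℂ) * L10 m j z * h i (j:ℂ),
    ?_, ?_, ?_, ?_⟩
  · -- differentiability
    intro k _ _
    apply Differentiable.sub
    apply Differentiable.add
    · apply Differentiable.fun_sum
      intro j hj
      obtain ⟨hj1, hj2⟩ := (memS10 m j).mp hj
      exact (hdiff j hj1 hj2).const_mul _
    · apply Differentiable.fun_sum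
      intro j hj
      exact (L10_diff m j).mul_const _
    · apply Differentiable.fun_sum
      intro i hi
      apply Differentiable.fun_sum
      intro j hj
      exact ((L10_diff m j).const_mul _).mul_const _
  · -- restriction
    intro k hk1 hk2
    have hkS : k ∈ S10 m := (memS10 m k).mpr ⟨hk1, hk2⟩
    funext z
    simp only
    have e1 : ∑ j ∈ S10 m, L10 m j (k:ℂ) * h j z = h k z := by
      rw [Finset.sum_eq_single k]
      · rw [L10_self, one_mul]
      · intro b hb hbk
        rw [L10_ne m b k hkS hbk.symm, zero_mul]
      · intro hk'; exact absurd hkS hk'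
    have e3 : ∑ i ∈ S10 m, ∑ j ∈ S10 m, L10 m i (k:ℂ) * L10 m j z * h i (j:ℂ)
        = ∑ j ∈ S10 m, L10 m j z * h k (j:ℂ) := by
      rw [Finset.sum_eq_single k]
      · apply Finset.sum_congr rfl
        intro j _
        rw [L10_self]; ring
      · intro b hb hbk
        apply Finset.sum_eq_zero
        intro j _
        rw [L10_ne m b k hkS hbk.symm]; ring
      · intro hk'; exact absurd hkS hk'
    have e2 : ∑ j ∈ S10 m, L10 m j z * h j (k:ℂ) = ∑ j ∈ S10 m, L10 m j z * h k (j:ℂ) := by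
      apply Finset.sum_congr rfl
      intro j hj
      obtain ⟨hj1, hj2⟩ := (memS10 m j).mp hj
      rw [hint j k hj1 hk1 hj2 hk2]
    rw [e1, e2, e3]
    ring
  · -- symmetry
    intro k _ _ z
    simp only
    push_cast
    have e1 : ∑ j ∈ S10 m, L10 m j (-(k:ℂ)) * h j (-z)
        = ∑ j ∈ S10 m, L10 m j (k:ℂ) * h j z := by
      rw [sumneg10]
      apply Finset.sum_congr rfl
      intro j hj
      obtain ⟨hj1, hj2⟩ := (memS10 m j).mp hj
      rw [L10_neg, ← hsym j hj1 hj2 z]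
    have e2 : ∑ j ∈ S10 m, L10 m j (-z) * h j (-(k:ℂ))
        = ∑ j ∈ S10 m, L10 m j z * h j (k:ℂ) := by
      rw [sumneg10]
      apply Finset.sum_congr rfl
      intro j hj
      obtain ⟨hj1, hj2⟩ := (memS10 m j).mp hj
      rw [L10_neg, ← hsym j hj1 hj2 (k:ℂ)]
    have e3 : ∑ i ∈ S10 m, ∑ j ∈ S10 m, L10 m i (-(k:ℂ)) * L10 m j (-z) * h i (j:ℂ)
        = ∑ i ∈ S10 m, ∑ j ∈ S10 m, L10 m i (k:ℂ) * L10 m j z * h i (j:ℂ) := by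
      rw [sumneg10]
      apply Finset.sum_congr rfl
      intro i hi
      obtain ⟨hi1, hi2⟩ := (memS10 m i).mp hi
      rw [sumneg10]
      apply Finset.sum_congr rfl
      intro j hj
      rw [L10_neg, L10_neg]
      push_cast
      rw [← hsym i hi1 hi2 (j:ℂ)]
    rw [e1, e2, e3]
  · -- interchange
    intro k l _ _ _ _
    simp only
    have e3 : ∑ i ∈ S10 m, ∑ j ∈ S10 m, L10 m i (l:ℂ) * L10 m j (k:ℂ) * h i (j:ℂ)
        = ∑ i ∈ S10 m, ∑ j ∈ S10 m, L10 m i (k:ℂ) * L10 m j (l:ℂ) * h i (j:ℂ) := by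
      rw [Finset.sum_comm]
      apply Finset.sum_congr rfl
      intro i hi
      apply Finset.sum_congr rfl
      intro j hj
      obtain ⟨hi1, hi2⟩ := (memS10 m i).mp hi
      obtain ⟨hj1, hj2⟩ := (memS10 m j).mp hj
      rw [hint j i hj1 hi1 hj2 hi2]
      ring
    rw [e3]
    ring
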